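/- Let K be a field and G a torsion-free group such that K[G] has only trivial units and such that K[G] is a prime ring. Then K[G] has no zero divisors. -/

import Mathlib

/-- Let `K` be a field and `G` a torsion-free group such that `K[G]` has only trivial
units and `K[G]` is a prime ring.  Then `K[G]` has no zero divisors. -/
theorem trivial_units_prime_no_zero_divisors {K : Type*} [Field K] {G : Type*} [Group G]
    (htf : ∀ g : G, g ≠ 1 → ¬IsOfFinOrder g)
    (htu : ∀ u : (MonoidAlgebra K G)ˣ, ∃ k : K, k ≠ 0 ∧ ∃ g : G,
      (u : MonoidAlgebra K G) = MonoidAlgebra.single g k)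
    (hprime : ∀ x y : MonoidAlgebra K G, (∀ t : MonoidAlgebra K G, x * t * y = 0) →
      x = 0 ∨ y = 0) :
    ∀ x y : MonoidAlgebra K G, x * y = 0 → x = 0 ∨ y = 0 := by
  intro x y hxy
  by_contra hcon
  push_neg at hcon
  obtain ⟨hx, hy⟩ := hcon
  have h1 : ¬ ∀ t : MonoidAlgebra K G, y * t * x = 0 := by
    intro h
    rcases hprime y x h with h' | h'
    · exact hy h'
    · exact hx h'
  push_neg at h1
  obtain ⟨r, hr⟩ := h1
  set t := y * r * x with ht
  have ht2 : t * t = 0 := by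
    have h2 : t * t = y * r * (x * y) * (r * x) := by rw [ht]; noncomm_ring
    rw [h2, hxy, mul_zero, zero_mul]
  have hu1 : (1 - t) * (1 + t) = 1 := by
    have : (1 - t) * (1 + t) = 1 - t * t := by noncomm_ring
    rw [this, ht2, sub_zero]
  have hu2 : (1 + t) * (1 - t) = 1 := by
    have : (1 + t) * (1 - t) = 1 - t * t := by noncomm_ring
    rw [this, ht2, sub_zero]
  obtain ⟨k, hk, g, hg⟩ := htu ⟨1 - t, 1 + t, hu1, hu2⟩
  simp only [Units.val_mk] at hg
  have httt : t = 1 - MonoidAlgebra.single g k := by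
    rw [← hg, sub_sub_cancel]
  set s := MonoidAlgebra.single g k with hs
  have h5 : (1 : MonoidAlgebra K G) - s - s + s * s = 0 := by
    have : (1 : MonoidAlgebra K G) - s - s + s * s = (1 - s) * (1 - s) := by noncomm_ring
    rw [this, ← httt, ht2]
  by_cases hg1 : g = 1
  · -- g = 1 : t = single 1 (1-k), t² = 0 forces k = 1, so t = 0, contradiction
    have hts : t = MonoidAlgebra.single (1 : G) (1 - k) := by
      rw [httt, hs, hg1, MonoidAlgebra.one_def, ← MonoidAlgebra.single_sub]
    have h7 : MonoidAlgebra.single (1 : G) (1 - k) * MonoidAlgebra.single (1 : G) (1 - k) = 0 := by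
      rw [← hts]; exact ht2
    rw [MonoidAlgebra.single_mul_single, one_mul] at h7
    have hk1 : (1 - k) * (1 - k) = 0 := MonoidAlgebra.single_eq_zero.mp h7
    have h8 : (1 : K) - k = 0 := by
      rcases mul_eq_zero.mp hk1 with h | h <;> exact h
    apply hr
    rw [hts, h8, MonoidAlgebra.single_zero]
  · -- g ≠ 1 : look at the coefficient of g*g
    have hgg1 : g * g ≠ 1 := by
      intro h
      apply htf g hg1
      refine isOfFinOrder_iff_pow_eq_one.mpr ⟨2, by norm_num, ?_⟩
      rw [pow_two]; exact h
    have hggg : g * g ≠ g := by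
      intro h
      exact hg1 (mul_eq_right.mp h)
    have hss : s * s = MonoidAlgebra.single (g * g) (k * k) := by
      rw [hs, MonoidAlgebra.single_mul_single]
    rw [hss] at h5
    have h5' : ((1 - s - s + MonoidAlgebra.single (g * g) (k * k) : MonoidAlgebra K G).coeff : G →₀ K)
        = (0 : G →₀ K) := congrArg MonoidAlgebra.coeff h5
    have h6 := Finsupp.ext_iff.mp h5' (g * g)
    classical
    rw [hs, MonoidAlgebra.one_def] at h6
    have h6' : (Finsupp.single (1 : G) (1 : K) - Finsupp.single g k - Finsupp.single g k
        + Finsupp.single (g * g) (k * k)) (g * g) = 0 := h6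
    clear h6
    have e1 : ¬ (1 : G) = g * g := fun h => hgg1 h.symm
    have e2 : ¬ g = g * g := fun h => hggg h.symm
    simp only [Finsupp.add_apply, Finsupp.sub_apply, Finsupp.single_apply, e1, e2,
      if_false, sub_zero, zero_sub, zero_add, if_true] at h6'
    rcases mul_eq_zero.mp h6' with h | h <;> exact hk h
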